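/- Let N be a positive integer, Δt > 0, λ ∈ ℝ, σ ≥ 0, let D be a real symmetric N×N matrix, and let w ∈ ℝᴺ. Suppose φ, ψ ∈ ℂᴺ satisfy, for every index j, the midpoint-scheme equation i·(ψ_j − φ_j)/Δt + (D·m)_j − λ·|m_j|^{2σ}·m_j − w_j·m_j = 0, where m = (φ + ψ)/2 (and the real matrix D acts on the complex vector m entrywise-linearly). Then Σ_j |ψ_j|² = Σ_j |φ_j|². -/

import Mathlib

open Complex Finset

/-- Discrete mass conservation for the stochastic midpoint scheme:
if `i(ψ_j − φ_j)/Δt + (D m)_j − λ|m_j|^{2σ} m_j − w_j m_j = 0` for all `j`, with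
`m = (φ + ψ)/2` and `D` real symmetric, then `Σ |ψ_j|² = Σ |φ_j|²`. -/
theorem stmt_7 (N : ℕ) (hN : 0 < N) (Δt : ℝ) (hΔt : 0 < Δt) (lam σ : ℝ) (hσ : 0 ≤ σ)
    (D : Matrix (Fin N) (Fin N) ℝ) (hD : D.IsSymm) (w : Fin N → ℝ) (φ ψ : Fin N → ℂ)
    (hscheme : ∀ j : Fin N,
      Complex.I * (ψ j - φ j) / (Δt : ℂ)
        + (∑ l : Fin N, (D j l : ℂ) * ((φ l + ψ l) / 2))
        - (lam : ℂ) * ((‖(φ j + ψ j) / 2‖ ^ (2 * σ) : ℝ) : ℂ)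
            * ((φ j + ψ j) / 2)
        - (w j : ℂ) * ((φ j + ψ j) / 2) = 0) :
    ∑ j : Fin N, ‖ψ j‖ ^ 2 = ∑ j : Fin N, ‖φ j‖ ^ 2 := by
  classical
  set m : Fin N → ℂ := fun j => (φ j + ψ j) / 2 with hm
  set r : Fin N → ℝ := fun j => ‖m j‖ ^ (2 * σ) with hrr
  -- per-index identity after multiplying by conj (m j)
  have key : ∀ j : Fin N,
      (starRingEnd ℂ) (m j) * (Complex.I * (ψ j - φ j) / (Δt : ℂ))
      + (∑ l : Fin N, (D j l : ℂ) * ((starRingEnd ℂ) (m j) * m l))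
      - ((lam * r j : ℝ) : ℂ) * ((starRingEnd ℂ) (m j) * m j)
      - ((w j : ℝ) : ℂ) * ((starRingEnd ℂ) (m j) * m j) = 0 := by
    intro j
    have h0 : Complex.I * (ψ j - φ j) / (Δt : ℂ)
        + (∑ l : Fin N, (D j l : ℂ) * m l)
        - ((lam * r j : ℝ) : ℂ) * m j
        - ((w j : ℝ) : ℂ) * m j = 0 := by
      have := hscheme j
      push_cast
      simp only [hm, hrr]
      linear_combination this
    have hsum : (∑ l : Fin N, (D j l : ℂ) * ((starRingEnd ℂ) (m j) * m l))
        = (starRingEnd ℂ) (m j) * (∑ l : Fin N, (D j l : ℂ) * m l) := by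
      rw [Finset.mul_sum]
      exact Finset.sum_congr rfl fun l _ => by ring
    rw [hsum]
    linear_combination (starRingEnd ℂ) (m j) * h0
  -- sum over j
  have hT : (∑ j : Fin N, (starRingEnd ℂ) (m j) * (Complex.I * (ψ j - φ j) / (Δt : ℂ)))
      + (∑ j : Fin N, ∑ l : Fin N, (D j l : ℂ) * ((starRingEnd ℂ) (m j) * m l))
      - (∑ j : Fin N, ((lam * r j : ℝ) : ℂ) * ((starRingEnd ℂ) (m j) * m j))
      - (∑ j : Fin N, ((w j : ℝ) : ℂ) * ((starRingEnd ℂ) (m j) * m j)) = 0 := by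
    rw [← Finset.sum_add_distrib, ← Finset.sum_sub_distrib, ← Finset.sum_sub_distrib]
    exact Finset.sum_eq_zero fun j _ => key j
  have hTim := congrArg Complex.im hT
  simp only [Complex.sub_im, Complex.add_im, Complex.im_sum, Complex.zero_im] at hTim
  -- imaginary part of symmetric matrix term vanishes
  have hA : (∑ j : Fin N, ∑ l : Fin N, ((D j l : ℂ) * ((starRingEnd ℂ) (m j) * m l)).im) = 0 := by
    have hanti : ∀ j l : Fin N, ((D j l : ℂ) * ((starRingEnd ℂ) (m j) * m l)).im
        = -((D l j : ℂ) * ((starRingEnd ℂ) (m l) * m j)).im := by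
      intro j l
      have hsym : D j l = D l j := by
        have := hD
        rw [Matrix.IsSymm] at this
        have := congrFun (congrFun this l) j
        simpa [Matrix.transpose_apply] using this
      simp [Complex.mul_im, Complex.mul_re, Complex.conj_re, Complex.conj_im,
        Complex.ofReal_re, Complex.ofReal_im, hsym]
      ring
    have hswap : (∑ j : Fin N, ∑ l : Fin N, ((D j l : ℂ) * ((starRingEnd ℂ) (m j) * m l)).im)
        = -(∑ j : Fin N, ∑ l : Fin N, ((D j l : ℂ) * ((starRingEnd ℂ) (m j) * m l)).im) := by
      conv_lhs => rw [Finset.sum_comm]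
      rw [← Finset.sum_neg_distrib]
      exact Finset.sum_congr rfl fun l _ => by
        rw [← Finset.sum_neg_distrib]
        exact Finset.sum_congr rfl fun j _ => hanti j l
    linarith
  -- real-coefficient |m|² terms have zero imaginary part
  have hB : ∀ (c : ℝ) (j : Fin N), ((c : ℂ) * ((starRingEnd ℂ) (m j) * m j)).im = 0 := by
    intro c j
    simp only [Complex.mul_im, Complex.mul_re, Complex.conj_re, Complex.conj_im,
      Complex.ofReal_re, Complex.ofReal_im]
    ring
  -- first term imaginary part
  have hC : ∀ j : Fin N, ((starRingEnd ℂ) (m j) * (Complex.I * (ψ j - φ j) / (Δt : ℂ))).im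
      = Δt⁻¹ * ((Complex.normSq (ψ j) - Complex.normSq (φ j)) / 2) := by
    intro j
    rw [div_eq_mul_inv, ← Complex.ofReal_inv]
    simp [hm, Complex.mul_im, Complex.mul_re, Complex.conj_re, Complex.conj_im,
      Complex.ofReal_re, Complex.ofReal_im, Complex.normSq_apply, Complex.add_re,
      Complex.add_im, Complex.sub_re, Complex.sub_im, Complex.I_re, Complex.I_im,
      Complex.div_re, Complex.div_im]
    ring
  simp only [hC, hA, hB, Finset.sum_const_zero] at hTim
  rw [← Finset.mul_sum] at hTim
  have hΔ : Δt⁻¹ ≠ 0 := inv_ne_zero (ne_of_gt hΔt)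
  have hS : ∑ j : Fin N, (Complex.normSq (ψ j) - Complex.normSq (φ j)) / 2 = 0 := by
    rcases mul_eq_zero.mp (by linarith : Δt⁻¹ *
        ∑ j : Fin N, (Complex.normSq (ψ j) - Complex.normSq (φ j)) / 2 = 0) with h | h
    · exact absurd h hΔ
    · exact h
  have hsum2 : (∑ j : Fin N, Complex.normSq (ψ j)) - (∑ j : Fin N, Complex.normSq (φ j)) = 0 := by
    rw [← Finset.sum_div] at hS
    rw [← Finset.sum_sub_distrib]
    linarith
  simp only [Complex.sq_norm]
  linarith
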